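/- arXiv:1412.6310 — 6 statements merged into one kernel-verified Lean document; each statement's English description precedes it below -/
import Mathlib

section
/- Let f be continuous on [a,b] and 0 < α < 1, and fix x ∈ (a,b]. Then the set Λ(α,f,x) = { ξ ∈ [a,x] : f(ξ) = Γ(2-α)·I^{1-α}_{a+}f(x)·(x-a)^{α-1} } is a nonempty closed subset of [a,x]. -/
open Set intervalIntegral Real MeasureTheory

/-- The set `Λ(α, f, x)` of fractional mean values is a nonempty closed subset of `[a,x]`. -/
theorem fractional_mean_value_set_nonempty_closed (a b x α : ℝ) (hab : a < b)
    (hx : x ∈ Set.Ioc a b) (hα : α ∈ Set.Ioo (0:ℝ) 1)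
    (f : ℝ → ℝ) (hf : ContinuousOn f (Set.Icc a b)) :
    let Λ : Set ℝ := {ξ ∈ Set.Icc a x |
      f ξ = Real.Gamma (2 - α) *
        ((1 / Real.Gamma (1 - α)) * ∫ t in a..x, f t * (x - t) ^ (-α)) *
        (x - a) ^ (α - 1)}
    Λ.Nonempty ∧ IsClosed Λ ∧ Λ ⊆ Set.Icc a x := by
  intro Λ
  obtain ⟨hax, hxb⟩ := hx
  obtain ⟨hα0, hα1⟩ := hα
  have hxa : (0:ℝ) < x - a := by linarith
  have hsub : Set.Icc a x ⊆ Set.Icc a b := Set.Icc_subset_Icc le_rfl hxb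
  have hf' : ContinuousOn f (Set.Icc a x) := hf.mono hsub
  set K : ℝ := Real.Gamma (2 - α) *
        ((1 / Real.Gamma (1 - α)) * ∫ t in a..x, f t * (x - t) ^ (-α)) *
        (x - a) ^ (α - 1) with hK
  -- integrability of weight
  have hw : IntervalIntegrable (fun t => (x - t) ^ (-α)) volume a x := by
    have := (intervalIntegral.intervalIntegrable_rpow' (a := x - a) (b := x - x)
      (r := -α) (by linarith)).comp_sub_left x
    simpa using this
  have hfw : IntervalIntegrable (fun t => f t * (x - t) ^ (-α)) volume a x :=
    hw.continuousOn_mul (by rwa [Set.uIcc_of_le hax.le])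
  -- value of the weight integral
  have hW : (∫ t in a..x, (x - t) ^ (-α)) = (x - a) ^ (1 - α) / (1 - α) := by
    rw [intervalIntegral.integral_comp_sub_left (fun t => t ^ (-α)) x]
    rw [integral_rpow (Or.inl (by linarith))]
    rw [sub_self, Real.zero_rpow (by linarith)]
    ring_nf
  -- min and max
  obtain ⟨ξm, hξm, hmin⟩ := isCompact_Icc.exists_isMinOn ⟨a, Set.left_mem_Icc.2 hax.le⟩ hf'
  obtain ⟨ξM, hξM, hmax⟩ := isCompact_Icc.exists_isMaxOn ⟨a, Set.left_mem_Icc.2 hax.le⟩ hf'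
  set m := f ξm
  set M := f ξM
  have hwpos : ∀ t ∈ Set.Icc a x, 0 ≤ (x - t) ^ (-α) := fun t ht =>
    Real.rpow_nonneg (by linarith [ht.2]) _
  have hIlow : m * ((x - a) ^ (1 - α) / (1 - α)) ≤ ∫ t in a..x, f t * (x - t) ^ (-α) := by
    have : (∫ t in a..x, m * (x - t) ^ (-α)) ≤ ∫ t in a..x, f t * (x - t) ^ (-α) := by
      apply intervalIntegral.integral_mono_on hax.le (hw.const_mul m) hfw
      intro t ht
      exact mul_le_mul_of_nonneg_right (hmin ht) (hwpos t ht)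
    rwa [intervalIntegral.integral_const_mul, hW] at this
  have hIhigh : (∫ t in a..x, f t * (x - t) ^ (-α)) ≤ M * ((x - a) ^ (1 - α) / (1 - α)) := by
    have : (∫ t in a..x, f t * (x - t) ^ (-α)) ≤ ∫ t in a..x, M * (x - t) ^ (-α) := by
      apply intervalIntegral.integral_mono_on hax.le hfw (hw.const_mul M)
      intro t ht
      exact mul_le_mul_of_nonneg_right (hmax ht) (hwpos t ht)
    rwa [intervalIntegral.integral_const_mul, hW] at this
  -- Gamma relation
  have hΓpos : 0 < Real.Gamma (1 - α) := Real.Gamma_pos_of_pos (by linarith)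
  have hΓ : Real.Gamma (2 - α) = (1 - α) * Real.Gamma (1 - α) := by
    have := Real.Gamma_add_one (ne_of_gt (by linarith : (0:ℝ) < 1 - α))
    rw [show (2:ℝ) - α = 1 - α + 1 by ring, this]
  -- key: the normalization constant
  have hnorm : ((x - a) ^ (1 - α) / (1 - α)) * ((1 - α) * (x - a) ^ (α - 1)) = 1 := by
    have h1 : (x - a) ^ (1 - α) * (x - a) ^ (α - 1) = 1 := by
      rw [← Real.rpow_add hxa]; norm_num
    rw [div_mul_eq_mul_div,
      show (x - a) ^ (1 - α) * ((1 - α) * (x - a) ^ (α - 1))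
          = (1 - α) * ((x - a) ^ (1 - α) * (x - a) ^ (α - 1)) from by ring,
      h1, mul_one, div_self (by linarith : (1:ℝ) - α ≠ 0)]
  have hKeq : K = (∫ t in a..x, f t * (x - t) ^ (-α)) * ((1 - α) * (x - a) ^ (α - 1)) := by
    rw [hK, hΓ]
    field_simp
  have hcpos : 0 < (1 - α) * (x - a) ^ (α - 1) := mul_pos (by linarith) (Real.rpow_pos_of_pos hxa _)
  have hmK : m ≤ K := by
    rw [hKeq]
    calc m = m * (((x - a) ^ (1 - α) / (1 - α)) * ((1 - α) * (x - a) ^ (α - 1))) := by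
            rw [hnorm]; ring
      _ = (m * ((x - a) ^ (1 - α) / (1 - α))) * ((1 - α) * (x - a) ^ (α - 1)) := by ring
      _ ≤ _ := mul_le_mul_of_nonneg_right hIlow hcpos.le
  have hKM : K ≤ M := by
    rw [hKeq]
    calc (∫ t in a..x, f t * (x - t) ^ (-α)) * ((1 - α) * (x - a) ^ (α - 1))
        ≤ (M * ((x - a) ^ (1 - α) / (1 - α))) * ((1 - α) * (x - a) ^ (α - 1)) :=
          mul_le_mul_of_nonneg_right hIhigh hcpos.le
      _ = M * (((x - a) ^ (1 - α) / (1 - α)) * ((1 - α) * (x - a) ^ (α - 1))) := by ring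
      _ = M := by rw [hnorm]; ring
  -- IVT
  have huIcc : Set.uIcc ξm ξM ⊆ Set.Icc a x := Set.uIcc_subset_Icc hξm hξM
  have : K ∈ f '' Set.uIcc ξm ξM := by
    apply intermediate_value_uIcc (hf'.mono huIcc)
    exact Set.Icc_subset_uIcc ⟨hmK, hKM⟩
  obtain ⟨ξ, hξ, hfξ⟩ := this
  refine ⟨⟨ξ, huIcc hξ, hfξ⟩, ?_, Set.sep_subset _ _⟩
  have : Λ = Set.Icc a x ∩ f ⁻¹' {K} := rfl
  rw [this]
  exact hf'.preimage_isClosed_of_isClosed isClosed_Icc isClosed_singleton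
end

section
/- Let f be continuous and strictly monotone on [a,b] with 0 < α < 1. Then for each x ∈ (a,b] there exists a unique ξ(x) ∈ [a,x] satisfying f(ξ(x)) = Γ(2-α)·I^{1-α}_{a+}f(x)·(x-a)^{α-1}. -/
open Real Set MeasureTheory intervalIntegral

/-- For `f` continuous and strictly monotone, the fractional mean value is unique. -/
theorem fractional_mean_value_unique (a b α : ℝ) (hab : a < b) (hα : α ∈ Set.Ioo (0:ℝ) 1)
    (f : ℝ → ℝ) (hf : ContinuousOn f (Set.Icc a b))
    (hmono : StrictMonoOn f (Set.Icc a b) ∨ StrictAntiOn f (Set.Icc a b)) :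
    ∀ x ∈ Set.Ioc a b, ∃! ξ, ξ ∈ Set.Icc a x ∧
      f ξ = Real.Gamma (2 - α) *
        ((1 / Real.Gamma (1 - α)) * ∫ t in a..x, f t * (x - t) ^ (-α)) *
        (x - a) ^ (α - 1) := by
  obtain ⟨hα0, hα1⟩ := hα
  intro x hx
  obtain ⟨hax, hxb⟩ := hx
  have haxle : a ≤ x := hax.le
  have hxa0 : (0:ℝ) < x - a := by linarith
  have hsub : Icc a x ⊆ Icc a b := Icc_subset_Icc le_rfl hxb
  have hfc : ContinuousOn f (Icc a x) := hf.mono hsub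
  set g : ℝ → ℝ := fun t => (x - t) ^ (-α) with hg
  -- integrability of g
  have hgint : IntervalIntegrable g volume a x := by
    have h1 : IntervalIntegrable (fun s : ℝ => s ^ (-α)) volume 0 (x - a) :=
      intervalIntegral.intervalIntegrable_rpow' (by linarith)
    have h2 := (h1.comp_sub_left x).symm
    simpa using h2
  -- value of ∫ g
  have hgval : (∫ t in a..x, g t) = (x - a) ^ (1 - α) / (1 - α) := by
    have h1 : (∫ t in a..x, g t) = ∫ s in (x - x)..(x - a), s ^ (-α) :=
      intervalIntegral.integral_comp_sub_left (fun s => s ^ (-α)) x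
    rw [h1, sub_self]
    rw [integral_rpow (Or.inl (by linarith))]
    rw [Real.zero_rpow (by intro h; linarith : -α + 1 ≠ 0)]
    ring_nf
  -- g nonneg on Icc a x
  have hgnn : ∀ t ∈ Icc a x, 0 ≤ g t := fun t ht =>
    Real.rpow_nonneg (by linarith [ht.2]) _
  -- integrability of f * g
  have hufg : uIcc a x = Icc a x := uIcc_of_le haxle
  have hfgint : IntervalIntegrable (fun t => f t * g t) volume a x :=
    hgint.continuousOn_mul (hufg ▸ hfc)
  -- min and max
  obtain ⟨p, hp, hpmin⟩ := isCompact_Icc.exists_isMinOn (nonempty_Icc.2 haxle) hfc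
  obtain ⟨q, hq, hqmax⟩ := isCompact_Icc.exists_isMaxOn (nonempty_Icc.2 haxle) hfc
  -- rewrite RHS
  have hΓpos : 0 < Real.Gamma (1 - α) := Real.Gamma_pos_of_pos (by linarith)
  have hΓ : Real.Gamma (2 - α) = (1 - α) * Real.Gamma (1 - α) := by
    have h := Real.Gamma_add_one (by intro h; linarith : (1:ℝ) - α ≠ 0)
    rw [show (2:ℝ) - α = (1 - α) + 1 by ring, h]
  set V : ℝ := Real.Gamma (2 - α) *
      ((1 / Real.Gamma (1 - α)) * ∫ t in a..x, f t * (x - t) ^ (-α)) * (x - a) ^ (α - 1) with hV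
  have hVeq : V = (1 - α) * (x - a) ^ (α - 1) * ∫ t in a..x, f t * g t := by
    rw [hV, hΓ]
    field_simp
    ring
  have hcpos : 0 < (1 - α) * (x - a) ^ (α - 1) :=
    mul_pos (by linarith) (Real.rpow_pos_of_pos hxa0 _)
  have hne : (1:ℝ) - α ≠ 0 := by linarith
  have hr : (x - a) ^ (α - 1) * (x - a) ^ (1 - α) = 1 := by
    rw [← Real.rpow_add hxa0]; norm_num
  have hcg : (1 - α) * (x - a) ^ (α - 1) * ∫ t in a..x, g t = 1 := by
    rw [hgval, show (1 - α) * (x - a) ^ (α - 1) * ((x - a) ^ (1 - α) / (1 - α))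
        = ((x - a) ^ (α - 1) * (x - a) ^ (1 - α)) * ((1 - α) / (1 - α)) by ring,
      hr, div_self hne, mul_one]
  -- bounds
  have hlow : f p ≤ V := by
    have hmono' : (∫ t in a..x, f p * g t) ≤ ∫ t in a..x, f t * g t := by
      apply intervalIntegral.integral_mono_on haxle (hgint.const_mul _) hfgint
      intro t ht
      exact mul_le_mul_of_nonneg_right (hpmin ht) (hgnn t ht)
    calc f p = (1 - α) * (x - a) ^ (α - 1) * ∫ t in a..x, f p * g t := by
            rw [intervalIntegral.integral_const_mul]
            rw [show (1 - α) * (x - a) ^ (α - 1) * (f p * ∫ t in a..x, g t)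
                = f p * ((1 - α) * (x - a) ^ (α - 1) * ∫ t in a..x, g t) by ring, hcg, mul_one]
      _ ≤ V := by rw [hVeq]; exact mul_le_mul_of_nonneg_left hmono' hcpos.le
  have hhigh : V ≤ f q := by
    have hmono' : (∫ t in a..x, f t * g t) ≤ ∫ t in a..x, f q * g t := by
      apply intervalIntegral.integral_mono_on haxle hfgint (hgint.const_mul _)
      intro t ht
      exact mul_le_mul_of_nonneg_right (hqmax ht) (hgnn t ht)
    calc V ≤ (1 - α) * (x - a) ^ (α - 1) * ∫ t in a..x, f q * g t := by
            rw [hVeq]; exact mul_le_mul_of_nonneg_left hmono' hcpos.le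
      _ = f q := by
            rw [intervalIntegral.integral_const_mul]
            rw [show (1 - α) * (x - a) ^ (α - 1) * (f q * ∫ t in a..x, g t)
                = f q * ((1 - α) * (x - a) ^ (α - 1) * ∫ t in a..x, g t) by ring, hcg, mul_one]
  -- existence by IVT
  have hsub2 : uIcc p q ⊆ Icc a x := uIcc_subset_Icc hp hq
  have hIVT := intermediate_value_uIcc (hfc.mono hsub2)
  have hVmem : V ∈ uIcc (f p) (f q) := by
    rw [uIcc_of_le (hlow.trans hhigh)]
    exact ⟨hlow, hhigh⟩
  obtain ⟨ξ, hξ, hfξ⟩ := hIVT hVmem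
  -- injectivity
  have hinj : InjOn f (Icc a x) := by
    rcases hmono with h | h
    · exact (h.mono hsub).injOn
    · exact (h.mono hsub).injOn
  exact ⟨ξ, ⟨hsub2 hξ, hfξ⟩, fun y ⟨hy, hfy⟩ => hinj hy (hsub2 hξ) (hfy.trans hfξ.symm)⟩
end

section
/- Let 0 < α < 1, let f ∈ L¹(a,b) be continuous with I^{1-α}_{a+}f absolutely continuous and (I^{1-α}_{a+}f)(a) = 0 (so that I^α_{a+} D^α_{a+} f = f), and suppose D^α_{a+}f is continuous on [a,b]. If f(x) = 0 for some x ∈ (a,b], then there exists ξ ∈ (a,x] with D^α_{a+} f(ξ) = 0. -/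
/-- Existence of a fractional critical point: if `I^α_{a+} D^α_{a+} f = f` on `(a,b]`,
`D^α_{a+} f` is continuous, and `f x = 0` for some `x ∈ (a,b]`, then `D^α_{a+} f` has
a root `ξ ∈ (a,x]`. -/
theorem fractional_critical_point_exists (a b α : ℝ) (hab : a < b)
    (hα : α ∈ Set.Ioo (0:ℝ) 1) (f : ℝ → ℝ) (hf : ContinuousOn f (Set.Icc a b)) :
    let Df : ℝ → ℝ :=
      fun x => deriv (fun y => (1 / Real.Gamma (1 - α)) * ∫ t in a..y, f t * (y - t) ^ (-α)) x
    ContinuousOn Df (Set.Icc a b) →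
    (∀ y ∈ Set.Ioc a b,
      (1 / Real.Gamma α) * (∫ t in a..y, Df t * (y - t) ^ (α - 1)) = f y) →
    ∀ x ∈ Set.Ioc a b, f x = 0 → ∃ ξ ∈ Set.Ioc a x, Df ξ = 0 := by
  intro Df hDf hrep x hx hfx
  obtain ⟨hax, hxb⟩ := hx
  by_contra hcon
  push_neg at hcon
  -- the kernel weight is interval integrable on a..x
  have hIccsub : Set.Icc a x ⊆ Set.Icc a b := Set.Icc_subset_Icc le_rfl hxb
  have hker : IntervalIntegrable (fun t => (x - t) ^ (α - 1)) MeasureTheory.volume a x := by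
    have h1 : IntervalIntegrable (fun s : ℝ => s ^ (α - 1)) MeasureTheory.volume (x - a) (x - x) :=
      intervalIntegral.intervalIntegrable_rpow' (by linarith [hα.1])
    simpa using h1.comp_sub_left x
  have hDfc : ContinuousOn Df (Set.uIcc a x) := by
    rw [Set.uIcc_of_le hax.le]
    exact hDf.mono hIccsub
  have hint : IntervalIntegrable (fun t => Df t * (x - t) ^ (α - 1)) MeasureTheory.volume a x :=
    hker.continuousOn_mul hDfc
  -- the integral equals 0
  have hJ : (∫ t in a..x, Df t * (x - t) ^ (α - 1)) = 0 := by
    have := hrep x ⟨hax, hxb⟩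
    rw [hfx] at this
    have hΓ : Real.Gamma α ≠ 0 := (Real.Gamma_pos_of_pos hα.1).ne'
    field_simp at this
    simpa using this
  -- sign constancy of Df on (a, x]
  have hsign : ∀ s ∈ Set.Ioc a x, ∀ t ∈ Set.Ioc a x, 0 < Df s → 0 < Df t := by
    intro s hs t ht hspos
    by_contra hneg
    push_neg at hneg
    have htneg : Df t < 0 := lt_of_le_of_ne hneg (hcon t ht)
    have hc : ContinuousOn Df (Set.uIcc s t) := by
      apply hDf.mono
      exact Set.uIcc_subset_Icc ⟨hs.1.le, hs.2.trans hxb⟩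
        ⟨ht.1.le, ht.2.trans hxb⟩
    have h0 : (0:ℝ) ∈ Set.uIcc (Df s) (Df t) :=
      Set.mem_uIcc.mpr (Or.inr ⟨htneg.le, hspos.le⟩)
    obtain ⟨ξ, hξ, hξ0⟩ := intermediate_value_uIcc hc h0
    have hξmem : ξ ∈ Set.Ioc a x := by
      rcases Set.mem_uIcc.mp hξ with ⟨h1, h2⟩ | ⟨h1, h2⟩
      · exact ⟨hs.1.trans_le h1, h2.trans ht.2⟩
      · exact ⟨ht.1.trans_le h1, h2.trans hs.2⟩
    exact hcon ξ hξmem hξ0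
  have hxmem : x ∈ Set.Ioc a x := ⟨hax, le_rfl⟩
  rcases lt_or_gt_of_ne (hcon x hxmem) with hneg | hpos
  · -- Df < 0 on (a,x]
    have hall : ∀ t ∈ Set.Ioo a x, Df t < 0 := by
      intro t ht
      by_contra h
      push_neg at h
      have : 0 < Df t := lt_of_le_of_ne h (Ne.symm (hcon t (Set.Ioo_subset_Ioc_self ht)))
      exact absurd (hsign t (Set.Ioo_subset_Ioc_self ht) x hxmem this) (not_lt.mpr hneg.le)
    have hpos' : 0 < ∫ t in a..x, -(Df t * (x - t) ^ (α - 1)) := by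
      apply intervalIntegral.intervalIntegral_pos_of_pos_on hint.neg _ hax
      intro t ht
      have h1 : (0:ℝ) < (x - t) ^ (α - 1) :=
        Real.rpow_pos_of_pos (by linarith [ht.2]) _
      have := hall t ht
      simp only [Pi.neg_apply]
      nlinarith
    rw [intervalIntegral.integral_neg, hJ] at hpos'
    simp at hpos'
  · -- Df > 0 on (a,x]
    have hall : ∀ t ∈ Set.Ioo a x, 0 < Df t :=
      fun t ht => hsign x hxmem t (Set.Ioo_subset_Ioc_self ht) hpos
    have hpos' : 0 < ∫ t in a..x, Df t * (x - t) ^ (α - 1) := by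
      apply intervalIntegral.intervalIntegral_pos_of_pos_on hint _ hax
      intro t ht
      have h1 : (0:ℝ) < (x - t) ^ (α - 1) :=
        Real.rpow_pos_of_pos (by linarith [ht.2]) _
      exact mul_pos (hall t ht) h1
    rw [hJ] at hpos'
    exact lt_irrefl 0 hpos'
end

section
/- Let β > 0, 0 < α < 1, and f(t) = t^β. For each x > 0, the fractional mean value ξ(x) ∈ (0,x) determined by f(ξ(x))·x^{1-α}/Γ(2-α) = I^{1-α}_{0+}f(x) satisfies ξ(x)/x = (Γ(2-α)·Γ(1+β)/Γ(β-α+2))^{1/β}, a constant independent of x. -/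
open intervalIntegral in
lemma beta_integral_real (α β x : ℝ) (hα : 0 < α) (hα1 : α < 1) (hβ : 0 < β) (hx : 0 < x) :
    ∫ t in (0:ℝ)..x, t ^ β * (x - t) ^ (-α) =
      x ^ (β + 1 - α) * (Real.Gamma (β + 1) * Real.Gamma (1 - α) / Real.Gamma (β + 2 - α)) := by
  have hs : 0 < ((β + 1 : ℝ) : ℂ).re := by simpa using by linarith
  have ht : 0 < ((1 - α : ℝ) : ℂ).re := by simpa using by linarith
  have hc : ∫ t in (0:ℝ)..x, ((t:ℂ) ^ (((β+1:ℝ):ℂ) - 1) * (((x:ℝ):ℂ) - t) ^ (((1-α:ℝ):ℂ) - 1)) =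
      ((x:ℝ):ℂ) ^ (((β+1:ℝ):ℂ) + ((1-α:ℝ):ℂ) - 1) * Complex.betaIntegral ((β+1:ℝ):ℂ) ((1-α:ℝ):ℂ) :=
    Complex.betaIntegral_scaled _ _ hx
  have hbeta : Complex.betaIntegral ((β+1:ℝ):ℂ) ((1-α:ℝ):ℂ) =
      ((Real.Gamma (β+1) * Real.Gamma (1-α) / Real.Gamma (β + 2 - α) : ℝ) : ℂ) := by
    have hG := Complex.Gamma_mul_Gamma_eq_betaIntegral hs ht
    have hsum : ((β+1:ℝ):ℂ) + ((1-α:ℝ):ℂ) = ((β + 2 - α : ℝ) : ℂ) := by push_cast; ring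
    rw [hsum] at hG
    rw [Complex.Gamma_ofReal, Complex.Gamma_ofReal, Complex.Gamma_ofReal] at hG
    have hGne : ((Real.Gamma (β + 2 - α) : ℝ) : ℂ) ≠ 0 := by
      exact_mod_cast (Real.Gamma_pos_of_pos (by linarith : (0:ℝ) < β + 2 - α)).ne'
    push_cast at hG hGne ⊢
    rw [eq_div_iff hGne]
    linear_combination -hG
  -- identify the complex integral with the real one
  have hre : ∫ t in (0:ℝ)..x, ((t:ℂ) ^ (((β+1:ℝ):ℂ) - 1) * (((x:ℝ):ℂ) - t) ^ (((1-α:ℝ):ℂ) - 1)) =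
      ((∫ t in (0:ℝ)..x, t ^ β * (x - t) ^ (-α) : ℝ) : ℂ) := by
    rw [← intervalIntegral.integral_ofReal]
    refine intervalIntegral.integral_congr fun t htt => ?_
    rw [Set.uIcc_of_le hx.le] at htt
    have h1 : (t:ℂ) ^ (((β+1:ℝ):ℂ) - 1) = ((t ^ β : ℝ) : ℂ) := by
      rw [show (((β+1:ℝ):ℂ) - 1) = ((β:ℝ):ℂ) by push_cast; ring,
        Complex.ofReal_cpow htt.1]
    have h2 : (((x:ℝ):ℂ) - t) ^ (((1-α:ℝ):ℂ) - 1) = (((x - t) ^ (-α) : ℝ) : ℂ) := by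
      rw [show (((1-α:ℝ):ℂ) - 1) = ((-α:ℝ):ℂ) by push_cast; ring,
        show ((x:ℝ):ℂ) - (t:ℂ) = ((x - t : ℝ):ℂ) by push_cast; ring,
        Complex.ofReal_cpow (by linarith [htt.2])]
    rw [h1, h2, ← Complex.ofReal_mul]
  rw [hre, hbeta] at hc
  have hpow : ((x:ℝ):ℂ) ^ (((β+1:ℝ):ℂ) + ((1-α:ℝ):ℂ) - 1) = ((x ^ (β + 1 - α) : ℝ) : ℂ) := by
    rw [show (((β+1:ℝ):ℂ) + ((1-α:ℝ):ℂ) - 1) = ((β + 1 - α : ℝ):ℂ) by push_cast; ring,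
      Complex.ofReal_cpow hx.le]
  rw [hpow, ← Complex.ofReal_mul] at hc
  exact_mod_cast hc

/-- For `f t = t^β` the fractional mean value `ξ(x)` satisfies
`ξ(x)/x = (Γ(2-α) Γ(1+β) / Γ(β-α+2))^(1/β)`, independent of `x`. -/
theorem fractional_mean_value_rpow (α β : ℝ) (hα : α ∈ Set.Ioo (0:ℝ) 1) (hβ : 0 < β) :
    ∀ x : ℝ, 0 < x → ∀ ξ ∈ Set.Ioo (0:ℝ) x,
      ξ ^ β * x ^ (1 - α) / Real.Gamma (2 - α) =
        (1 / Real.Gamma (1 - α)) * (∫ t in (0:ℝ)..x, t ^ β * (x - t) ^ (-α)) →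
      ξ / x = (Real.Gamma (2 - α) * Real.Gamma (1 + β) / Real.Gamma (β - α + 2)) ^ (1 / β) := by
  obtain ⟨hα0, hα1⟩ := hα
  intro x hx ξ hξ heq
  obtain ⟨hξ0, hξx⟩ := hξ
  rw [beta_integral_real α β x hα0 hα1 hβ hx] at heq
  have hG1 : 0 < Real.Gamma (1 - α) := Real.Gamma_pos_of_pos (by linarith)
  have hG2 : 0 < Real.Gamma (2 - α) := Real.Gamma_pos_of_pos (by linarith)
  have hG3 : 0 < Real.Gamma (β + 2 - α) := Real.Gamma_pos_of_pos (by linarith)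
  have hxb : (0:ℝ) < x ^ (1 - α) := Real.rpow_pos_of_pos hx _
  have hx' : x ^ (β + 1 - α) = x ^ β * x ^ (1 - α) := by
    rw [← Real.rpow_add hx]; ring_nf
  have key : (ξ / x) ^ β = Real.Gamma (2 - α) * Real.Gamma (1 + β) / Real.Gamma (β - α + 2) := by
    rw [Real.div_rpow hξ0.le hx.le,
      show Real.Gamma (1 + β) = Real.Gamma (β + 1) by ring_nf,
      show Real.Gamma (β - α + 2) = Real.Gamma (β + 2 - α) by ring_nf]
    rw [hx'] at heq
    have hxbpos : (0:ℝ) < x ^ β := Real.rpow_pos_of_pos hx _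
    have hc : x ^ (1-α) * Real.Gamma (1-α) ≠ 0 := by positivity
    have h2 : ξ ^ β * Real.Gamma (β+2-α) = x ^ β * Real.Gamma (β+1) * Real.Gamma (2-α) :=
      mul_right_cancel₀ hc (by field_simp at heq; linear_combination (x ^ (1 - α) * Real.Gamma (1 - α)) * heq)
    field_simp
    linear_combination h2
  rw [show ξ / x = ((ξ / x) ^ β) ^ (1/β) by
    rw [← Real.rpow_mul (div_nonneg hξ0.le hx.le), mul_one_div_cancel hβ.ne',
      Real.rpow_one], key]
end

section
/- Let f ∈ C¹[a,b], 0 < α < 1, and suppose for all base points x₀ < y₀ in [a,b] and all admissible δ > 0, the fractional mean values ξ_x ∈ (x₀, x₀+δ) and ξ_y ∈ (y₀, y₀+δ) of f' satisfy ξ_x - x₀ = ξ_y - y₀ (property (P) for f'). Then: f is convex on [a,b] if and only if for all such x₀, y₀, δ one has D^α_{x₀+}f(·-x₀)(x₀+δ) ≤ D^α_{y₀+}f(·-y₀)(y₀+δ) (f is δ-increasing). -/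
open Set MeasureTheory intervalIntegral

section Aux

variable {a b α : ℝ}

lemma frac_wInt (hα1 : α < 1) (δ : ℝ) :
    IntervalIntegrable (fun s : ℝ => (δ - s) ^ (-α)) volume 0 δ := by
  have h := intervalIntegrable_rpow' (a := (0:ℝ)) (b := δ) (show (-1:ℝ) < -α by linarith)
  simpa using (h.comp_sub_left δ).symm

lemma frac_shiftInt (hα1 : α < 1) {f' : ℝ → ℝ} (hf' : ContinuousOn f' (Icc a b))
    {x₀ δ : ℝ} (hx : a ≤ x₀) (hδ : 0 ≤ δ) (hxb : x₀ + δ ≤ b) :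
    IntervalIntegrable (fun s => f' (x₀ + s) * (δ - s) ^ (-α)) volume 0 δ := by
  apply (frac_wInt hα1 δ).continuousOn_mul
  have hc : ContinuousOn (fun s : ℝ => f' (x₀ + s)) (Icc 0 δ) := by
    apply hf'.comp ((continuous_const.add continuous_id).continuousOn)
    intro s hs
    show x₀ + s ∈ Icc a b
    exact ⟨by linarith [hs.1], by linarith [hs.2]⟩
  rwa [uIcc_of_le hδ]

lemma frac_subst (f' : ℝ → ℝ) (x₀ δ : ℝ) :
    (∫ t in x₀..(x₀ + δ), f' t * (x₀ + δ - t) ^ (-α)) =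
      ∫ s in (0:ℝ)..δ, f' (x₀ + s) * (δ - s) ^ (-α) := by
  have h1 : ∀ s : ℝ, f' (x₀ + s) * (δ - s) ^ (-α)
      = (fun t => f' t * (x₀ + δ - t) ^ (-α)) (x₀ + s) := by
    intro s
    simp only
    congr 2
    ring
  calc (∫ t in x₀..(x₀ + δ), f' t * (x₀ + δ - t) ^ (-α))
      = ∫ t in (x₀ + 0)..(x₀ + δ), f' t * (x₀ + δ - t) ^ (-α) := by rw [add_zero]
    _ = ∫ s in (0:ℝ)..δ, (fun t => f' t * (x₀ + δ - t) ^ (-α)) (x₀ + s) :=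
        (intervalIntegral.integral_comp_add_left (fun t => f' t * (x₀ + δ - t) ^ (-α)) x₀).symm
    _ = ∫ s in (0:ℝ)..δ, f' (x₀ + s) * (δ - s) ^ (-α) := by simp only [← h1]

lemma frac_wVal (hα1 : α < 1) {δ : ℝ} (hδ : 0 ≤ δ) :
    (∫ s in (0:ℝ)..δ, (δ - s) ^ (-α)) = δ ^ (1 - α) / (1 - α) := by
  rw [intervalIntegral.integral_comp_sub_left (fun x : ℝ => x ^ (-α)) δ]
  rw [sub_self, sub_zero, integral_rpow (Or.inl (by linarith))]
  rw [Real.zero_rpow (by intro h; linarith : (-α) + 1 ≠ 0)]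
  rw [show -α + 1 = 1 - α from by ring]
  ring

lemma frac_deriv_le (hα0 : 0 < α) (hα1 : α < 1) {f' : ℝ → ℝ}
    (hf' : ContinuousOn f' (Icc a b))
    {u v : ℝ} (hu : u ∈ Icc a b) (hv : v ∈ Icc a b) (huv : u < v) (hvb : v < b)
    (H : ∀ δ : ℝ, 0 < δ → u + δ < v → v + δ ≤ b →
      (∫ s in (0:ℝ)..δ, f' (u + s) * (δ - s) ^ (-α)) ≤
        ∫ s in (0:ℝ)..δ, f' (v + s) * (δ - s) ^ (-α)) :
    f' u ≤ f' v := by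
  by_contra hlt
  push_neg at hlt
  set ε := (f' u - f' v) / 3 with hεdef
  have hε0 : 0 < ε := by rw [hεdef]; linarith
  obtain ⟨r₁, hr₁0, hr₁⟩ := Metric.continuousWithinAt_iff.mp (hf' u hu) ε hε0
  obtain ⟨r₂, hr₂0, hr₂⟩ := Metric.continuousWithinAt_iff.mp (hf' v hv) ε hε0
  set δ := min (min (r₁ / 2) (r₂ / 2)) (min ((v - u) / 2) ((b - v) / 2)) with hδdef
  have hδ0 : 0 < δ := by
    apply lt_min (lt_min (by linarith) (by linarith)) (lt_min (by linarith) (by linarith))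
  have hδr₁ : δ < r₁ := lt_of_le_of_lt ((min_le_left _ _).trans (min_le_left _ _)) (by linarith)
  have hδr₂ : δ < r₂ := lt_of_le_of_lt ((min_le_left _ _).trans (min_le_right _ _)) (by linarith)
  have hδuv : δ ≤ (v - u) / 2 := (min_le_right _ _).trans (min_le_left _ _)
  have hδvb : δ ≤ (b - v) / 2 := (min_le_right _ _).trans (min_le_right _ _)
  have h1 : u + δ < v := by linarith
  have h2 : v + δ ≤ b := by linarith
  have key := H δ hδ0 h1 h2
  have wnn : ∀ s ∈ Icc (0:ℝ) δ, (0:ℝ) ≤ (δ - s) ^ (-α) := fun s hs =>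
    Real.rpow_nonneg (by linarith [hs.2]) _
  have intu : IntervalIntegrable (fun s => f' (u + s) * (δ - s) ^ (-α)) volume 0 δ :=
    frac_shiftInt hα1 hf' hu.1 hδ0.le (by linarith [hu.1])
  have intv : IntervalIntegrable (fun s => f' (v + s) * (δ - s) ^ (-α)) volume 0 δ :=
    frac_shiftInt hα1 hf' hv.1 hδ0.le h2
  have lb : (f' u - ε) * (δ ^ (1 - α) / (1 - α)) ≤
      ∫ s in (0:ℝ)..δ, f' (u + s) * (δ - s) ^ (-α) := by
    calc (f' u - ε) * (δ ^ (1 - α) / (1 - α))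
        = ∫ s in (0:ℝ)..δ, (f' u - ε) * (δ - s) ^ (-α) := by
          rw [intervalIntegral.integral_const_mul, frac_wVal hα1 hδ0.le]
      _ ≤ _ := by
          apply intervalIntegral.integral_mono_on hδ0.le
            ((frac_wInt hα1 δ).const_mul _) intu
          intro s hs
          apply mul_le_mul_of_nonneg_right _ (wnn s hs)
          have hmem : u + s ∈ Icc a b :=
            ⟨by linarith [hs.1, hu.1], by linarith [hs.2, h1, hvb]⟩
          have := hr₁ hmem (by
            rw [Real.dist_eq]
            rw [abs_of_nonneg (by linarith [hs.1] : (0:ℝ) ≤ u + s - u)]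
            linarith [hs.2])
          rw [Real.dist_eq, abs_lt] at this
          linarith [this.1, this.2]
  have ub : (∫ s in (0:ℝ)..δ, f' (v + s) * (δ - s) ^ (-α)) ≤
      (f' v + ε) * (δ ^ (1 - α) / (1 - α)) := by
    calc (∫ s in (0:ℝ)..δ, f' (v + s) * (δ - s) ^ (-α))
        ≤ ∫ s in (0:ℝ)..δ, (f' v + ε) * (δ - s) ^ (-α) := by
          apply intervalIntegral.integral_mono_on hδ0.le intv
            ((frac_wInt hα1 δ).const_mul _)
          intro s hs
          apply mul_le_mul_of_nonneg_right _ (wnn s hs)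
          have hmem : v + s ∈ Icc a b :=
            ⟨by linarith [hs.1, hv.1, hu.1, huv], by linarith [hs.2, h2]⟩
          have := hr₂ hmem (by
            rw [Real.dist_eq]
            rw [abs_of_nonneg (by linarith [hs.1] : (0:ℝ) ≤ v + s - v)]
            linarith [hs.2])
          rw [Real.dist_eq, abs_lt] at this
          linarith [this.1, this.2]
      _ = (f' v + ε) * (δ ^ (1 - α) / (1 - α)) := by
          rw [intervalIntegral.integral_const_mul, frac_wVal hα1 hδ0.le]
  have hW : 0 < δ ^ (1 - α) / (1 - α) := by
    apply div_pos (Real.rpow_pos_of_pos hδ0 _) (by linarith)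
  have hchain : (f' u - ε) * (δ ^ (1 - α) / (1 - α)) ≤
      (f' v + ε) * (δ ^ (1 - α) / (1 - α)) := le_trans lb (le_trans key ub)
  have := (mul_le_mul_iff_left₀ hW).mp hchain
  rw [hεdef] at this
  linarith

end Aux

/-- Theorem 4.5: if `f'` satisfies property (P) (translation-invariance of fractional
mean values), then `f` is convex on `[a,b]` iff `f` is δ-increasing, i.e. the
Riemann–Liouville derivatives `D^α_{x₀+} f (x₀+δ) = I^{1-α}_{x₀+} f' (x₀+δ)` are
monotone in the base point. -/
theorem convex_iff_delta_increasing (a b α : ℝ) (hab : a < b) (hα : α ∈ Set.Ioo (0:ℝ) 1)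
    (f f' : ℝ → ℝ) (hderiv : ∀ t ∈ Set.Icc a b, HasDerivAt f (f' t) t)
    (hf' : ContinuousOn f' (Set.Icc a b))
    (hP : ∀ x₀ y₀ δ : ℝ, a ≤ x₀ → x₀ + δ < y₀ → y₀ + δ ≤ b → 0 < δ →
      ∀ ξx ∈ Set.Ioo x₀ (x₀ + δ), ∀ ξy ∈ Set.Ioo y₀ (y₀ + δ),
        f' ξx * δ ^ (1 - α) / Real.Gamma (2 - α) =
          (1 / Real.Gamma (1 - α)) * (∫ t in x₀..(x₀ + δ), f' t * (x₀ + δ - t) ^ (-α)) →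
        f' ξy * δ ^ (1 - α) / Real.Gamma (2 - α) =
          (1 / Real.Gamma (1 - α)) * (∫ t in y₀..(y₀ + δ), f' t * (y₀ + δ - t) ^ (-α)) →
        ξx - x₀ = ξy - y₀) :
    ConvexOn ℝ (Set.Icc a b) f ↔
      ∀ x₀ y₀ δ : ℝ, a ≤ x₀ → x₀ + δ < y₀ → y₀ + δ ≤ b → 0 < δ →
        (1 / Real.Gamma (1 - α)) * (∫ t in x₀..(x₀ + δ), f' t * (x₀ + δ - t) ^ (-α)) ≤
          (1 / Real.Gamma (1 - α)) * (∫ t in y₀..(y₀ + δ), f' t * (y₀ + δ - t) ^ (-α)) := by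
  obtain ⟨hα0, hα1⟩ := hα
  have hΓpos : 0 < Real.Gamma (1 - α) := Real.Gamma_pos_of_pos (by linarith)
  constructor
  · intro hconv x₀ y₀ δ hax hxy hyb hδ
    have hmono : MonotoneOn f' (Set.Icc a b) := by
      intro s hs t ht hst
      rcases hst.eq_or_lt with rfl | h
      · exact le_refl _
      · exact (hconv.le_slope_of_hasDerivAt hs ht h (hderiv s hs)).trans
          (hconv.slope_le_of_hasDerivAt hs ht h (hderiv t ht))
    rw [frac_subst, frac_subst]
    apply mul_le_mul_of_nonneg_left _ (by positivity)
    apply intervalIntegral.integral_mono_on hδ.le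
      (frac_shiftInt hα1 hf' hax hδ.le (by linarith))
      (frac_shiftInt hα1 hf' (by linarith) hδ.le hyb)
    intro s hs
    apply mul_le_mul_of_nonneg_right _ (Real.rpow_nonneg (by linarith [hs.2]) _)
    exact hmono ⟨by linarith [hs.1], by linarith [hs.2]⟩
      ⟨by linarith [hs.1], by linarith [hs.2]⟩ (by linarith)
  · intro H
    apply MonotoneOn.convexOn_of_deriv (convex_Icc a b)
    · exact fun x hx => (hderiv x hx).continuousAt.continuousWithinAt
    · intro x hx
      rw [interior_Icc] at hx
      exact ((hderiv x (Set.Ioo_subset_Icc_self hx)).differentiableAt).differentiableWithinAt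
    · rw [interior_Icc]
      intro u hu v hv huv
      rcases huv.eq_or_lt with rfl | h
      · exact le_refl _
      have hderu := (hderiv u (Set.Ioo_subset_Icc_self hu)).deriv
      have hderv := (hderiv v (Set.Ioo_subset_Icc_self hv)).deriv
      rw [hderu, hderv]
      apply frac_deriv_le hα0 hα1 hf' (Set.Ioo_subset_Icc_self hu)
        (Set.Ioo_subset_Icc_self hv) h hv.2
      intro δ hδ h1 h2
      have := H u v δ hu.1.le h1 h2 hδ
      rw [frac_subst, frac_subst] at this
      exact le_of_mul_le_mul_left this (by positivity)
end

section
/- Let 0 < α < 1 and let f : ℝ → ℝ be continuous and periodic with period τ > 0, such that the Riemann–Liouville derivative D^α_{0+}f exists and I^α_{0+}(D^α_{0+}f(·+τ) - D^α_{0+}f)(x) = 0 for all x, with the convolution-kernel representation valid. Then D^α_{0+}f(x+τ) = D^α_{0+}f(x) for all x > 0: periodic functions have periodic fractional derivatives with the same period. -/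
open MeasureTheory Set intervalIntegral

-- kernel interval integrability
lemma kernelInt {α : ℝ} (hα : α ∈ Set.Ioo (0:ℝ) 1) {t y : ℝ} (hty : t < y) :
    IntervalIntegrable (fun x => (x - t) ^ (α - 1) * (y - x) ^ (-α)) volume t y := by
  obtain ⟨hα0, hα1⟩ := hα
  set m := (t + y) / 2 with hm
  have htm : t < m := by simp [hm]; linarith
  have hmy : m < y := by simp [hm]; linarith
  have h1 : IntervalIntegrable (fun x => (x - t) ^ (α - 1) * (y - x) ^ (-α)) volume t m := by
    have hi : IntervalIntegrable (fun x : ℝ => (x - t) ^ (α - 1)) volume t m := by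
      have := (intervalIntegrable_rpow' (a := 0) (b := m - t) (r := α - 1) (by linarith)).comp_sub_right t
      simpa using this
    apply hi.mul_continuousOn
    apply ContinuousOn.rpow_const
    · exact (continuous_const.sub continuous_id).continuousOn
    · intro x hx
      rw [uIcc_of_le htm.le] at hx
      left
      have : x ≤ m := hx.2
      have : 0 < y - x := by linarith
      positivity
  have h2 : IntervalIntegrable (fun x => (x - t) ^ (α - 1) * (y - x) ^ (-α)) volume m y := by
    have hi : IntervalIntegrable (fun x : ℝ => (y - x) ^ (-α)) volume m y := by
      have := (intervalIntegrable_rpow' (a := 0) (b := y - m) (r := -α) (by linarith)).comp_sub_left y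
      simpa using this.symm
    apply hi.continuousOn_mul
    apply ContinuousOn.rpow_const
    · exact (continuous_id.sub continuous_const).continuousOn
    · intro x hx
      rw [uIcc_of_le hmy.le] at hx
      left
      have : m ≤ x := hx.1
      have : 0 < x - t := by linarith
      positivity
  exact h1.trans h2

noncomputable def betaC (α : ℝ) : ℝ := ∫ s in (0:ℝ)..1, (s - 0) ^ (α - 1) * (1 - s) ^ (-α)

lemma betaC_pos {α : ℝ} (hα : α ∈ Set.Ioo (0:ℝ) 1) : 0 < betaC α := by
  apply intervalIntegral_pos_of_pos_on (kernelInt hα one_pos)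
  · intro s hs
    have h1 : 0 < s - 0 := by simpa using hs.1
    have h2 : 0 < 1 - s := by linarith [hs.2]
    positivity
  · exact one_pos

lemma betaIdent {α : ℝ} (hα : α ∈ Set.Ioo (0:ℝ) 1) {t y : ℝ} (ht : 0 ≤ t) (hty : t < y) :
    ∫ x in t..y, (x - t) ^ (α - 1) * (y - x) ^ (-α) = betaC α := by
  have hc : y - t ≠ 0 := by linarith
  have key := integral_comp_mul_add (a := (0:ℝ)) (b := 1)
    (f := fun x => (x - t) ^ (α - 1) * (y - x) ^ (-α)) (c := y - t) hc t
  -- key : ∫ s in 0..1, f ((y-t)*s + t) = (y-t)⁻¹ • ∫ x in (y-t)*0+t..(y-t)*1+t, f x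
  have h2 : ∀ s ∈ uIcc (0:ℝ) 1,
      ((y - t) * s + t - t) ^ (α - 1) * (y - ((y - t) * s + t)) ^ (-α)
        = (y - t)⁻¹ * ((s - 0) ^ (α - 1) * (1 - s) ^ (-α)) := by
    intro s hs
    rw [uIcc_of_le (by norm_num)] at hs
    have hs0 : 0 ≤ s := hs.1
    have hs1 : s ≤ 1 := hs.2
    have e1 : (y - t) * s + t - t = (y - t) * s := by ring
    have e2 : y - ((y - t) * s + t) = (y - t) * (1 - s) := by ring
    rw [e1, e2, Real.mul_rpow (by linarith) hs0, Real.mul_rpow (by linarith) (by linarith)]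
    rw [show (y - t) ^ (α - 1) * s ^ (α - 1) * ((y - t) ^ (-α) * (1 - s) ^ (-α))
        = ((y - t) ^ (α - 1) * (y - t) ^ (-α)) * (s ^ (α - 1) * (1 - s) ^ (-α)) by ring]
    rw [← Real.rpow_add (by linarith), show α - 1 + -α = -1 by ring, Real.rpow_neg_one]
    simp
  rw [intervalIntegral.integral_congr h2] at key
  rw [intervalIntegral.integral_const_mul] at key
  simp only [mul_zero, zero_add, mul_one, sub_add_cancel, smul_eq_mul] at key
  rw [betaC]
  simp only [sub_zero]
  have := key.symm
  field_simp at this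
  simpa only [sub_zero] using this

lemma key_zero {α : ℝ} (hα : α ∈ Set.Ioo (0:ℝ) 1) (g : ℝ → ℝ) (hg : Continuous g)
    (h : ∀ x : ℝ, 0 < x → ∫ t in (0:ℝ)..x, g t * (x - t) ^ (α - 1) = 0) :
    ∀ y : ℝ, 0 < y → ∫ t in (0:ℝ)..y, g t = 0 := by
  obtain ⟨hα0, hα1⟩ := hα
  intro y hy
  set μ := volume.restrict (Ioc (0:ℝ) y) with hμ
  set S : Set (ℝ × ℝ) := {p | 0 < p.2 ∧ p.2 ≤ p.1} with hS
  set K : ℝ × ℝ → ℝ := fun p => g p.2 * (p.1 - p.2) ^ (α - 1) * (y - p.1) ^ (-α) with hK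
  set H : ℝ × ℝ → ℝ := S.indicator K with hH
  have measS : MeasurableSet S :=
    (measurableSet_lt measurable_const measurable_snd).inter
      (measurableSet_le measurable_snd measurable_fst)
  have measK : Measurable K :=
    ((hg.measurable.comp measurable_snd).mul
      ((measurable_fst.sub measurable_snd).pow measurable_const)).mul
      ((measurable_const.sub measurable_fst).pow measurable_const)
  have measH : Measurable H := measK.indicator measS
  have aesm : AEStronglyMeasurable H (μ.prod volume) := measH.aestronglyMeasurable
  -- slice description
  have slice : ∀ x : ℝ, (fun t => H (x, t))
      = (Ioc (0:ℝ) x).indicator (fun t => g t * (x - t) ^ (α - 1) * (y - x) ^ (-α)) := by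
    intro x
    funext t
    simp only [hH, hS, hK, Set.indicator_apply, Set.mem_setOf_eq, Set.mem_Ioc]
  -- interval integrability of the t-slice kernel
  have sliceII : ∀ x : ℝ, IntervalIntegrable
      (fun t => g t * (x - t) ^ (α - 1) * (y - x) ^ (-α)) volume 0 x := by
    intro x
    have base : IntervalIntegrable (fun t : ℝ => (x - t) ^ (α - 1)) volume 0 x := by
      have := (intervalIntegrable_rpow' (a := 0) (b := x) (r := α - 1)
        (by linarith)).comp_sub_left x
      simpa using this.symm
    exact (base.continuousOn_mul hg.continuousOn).mul_const _
  have sliceInt : ∀ x ∈ Ioc (0:ℝ) y, Integrable (fun t => H (x, t)) volume := by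
    intro x hx
    rw [slice x, integrable_indicator_iff measurableSet_Ioc]
    exact (intervalIntegrable_iff_integrableOn_Ioc_of_le hx.1.le).mp (sliceII x)
  -- bound on [0, y]
  obtain ⟨M, hM⟩ := (isCompact_Icc (a := (0:ℝ)) (b := y)).exists_bound_of_continuousOn
    hg.continuousOn
  -- value of ∫ (x-t)^(α-1)
  have rpowInt : ∀ x : ℝ, 0 ≤ x → ∫ t in (0:ℝ)..x, (x - t) ^ (α - 1) = x ^ α / α := by
    intro x hx
    have cs := intervalIntegral.integral_comp_sub_left (a := (0:ℝ)) (b := x)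
      (fun s : ℝ => s ^ (α - 1)) x
    simp only [sub_self, sub_zero] at cs
    rw [cs, integral_rpow (Or.inl (by linarith))]
    rw [Real.zero_rpow (by linarith : α - 1 + 1 ≠ 0)]
    ring_nf
  -- norm integral bound
  have normBound : ∀ x ∈ Ioc (0:ℝ) y,
      (∫ t, ‖H (x, t)‖) ≤ M * (y - x) ^ (-α) * (x ^ α / α) := by
    intro x hx
    have e1 : (fun t => ‖H (x, t)‖) = (Ioc (0:ℝ) x).indicator
        (fun t => ‖g t * (x - t) ^ (α - 1) * (y - x) ^ (-α)‖) := by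
      funext t
      rw [congrFun (slice x) t, norm_indicator_eq_indicator_norm]
    rw [e1, MeasureTheory.integral_indicator measurableSet_Ioc]
    have ILhs : IntegrableOn (fun t => ‖g t * (x - t) ^ (α - 1) * (y - x) ^ (-α)‖)
        (Ioc 0 x) volume :=
      ((intervalIntegrable_iff_integrableOn_Ioc_of_le hx.1.le).mp (sliceII x)).norm
    have IRhs : IntegrableOn (fun t => M * (x - t) ^ (α - 1) * (y - x) ^ (-α))
        (Ioc 0 x) volume := by
      have base : IntervalIntegrable (fun t : ℝ => (x - t) ^ (α - 1)) volume 0 x := by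
        have := (intervalIntegrable_rpow' (a := 0) (b := x) (r := α - 1)
          (by linarith)).comp_sub_left x
        simpa using this.symm
      exact (intervalIntegrable_iff_integrableOn_Ioc_of_le hx.1.le).mp
        ((base.const_mul M).mul_const _)
    have mono := setIntegral_mono_on ILhs IRhs measurableSet_Ioc ?_
    · refine le_trans mono (le_of_eq ?_)
      have : (fun t => M * (x - t) ^ (α - 1) * (y - x) ^ (-α))
          = fun t => (M * (y - x) ^ (-α)) * ((x - t) ^ (α - 1)) := by
        funext t; ring
      rw [this, ← intervalIntegral.integral_of_le hx.1.le,
        intervalIntegral.integral_const_mul, rpowInt x hx.1.le]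
    · intro t ht
      have htx : 0 ≤ x - t := by linarith [ht.2]
      have hyx : 0 ≤ y - x := by linarith [hx.2]
      rw [norm_mul, norm_mul]
      rw [Real.norm_of_nonneg (Real.rpow_nonneg htx _),
        Real.norm_of_nonneg (Real.rpow_nonneg hyx _)]
      have hgt : ‖g t‖ ≤ M := hM t ⟨ht.1.le, le_trans ht.2 hx.2⟩
      have h1 : (0:ℝ) ≤ (x - t) ^ (α - 1) := Real.rpow_nonneg htx _
      have h2 : (0:ℝ) ≤ (y - x) ^ (-α) := Real.rpow_nonneg hyx _
      have := mul_le_mul_of_nonneg_right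
        (mul_le_mul_of_nonneg_right hgt h1) h2
      exact this
  -- integrability of the norm-integral function
  have Bint : Integrable (fun x => M * (y - x) ^ (-α) * (x ^ α / α)) μ := by
    have base : IntervalIntegrable (fun x : ℝ => (y - x) ^ (-α)) volume 0 y := by
      have := (intervalIntegrable_rpow' (a := 0) (b := y) (r := -α)
        (by linarith)).comp_sub_left y
      simpa using this.symm
    have contOn : ContinuousOn (fun x : ℝ => M * (x ^ α / α)) (uIcc 0 y) :=
      (continuous_const.mul ((Real.continuous_rpow_const hα0.le).div_const _)).continuousOn
    have ii : IntervalIntegrable (fun x : ℝ => (M * (x ^ α / α)) * (y - x) ^ (-α))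
        volume 0 y := base.continuousOn_mul contOn
    have hio := (intervalIntegrable_iff_integrableOn_Ioc_of_le hy.le).mp ii
    have e : (fun x : ℝ => M * (y - x) ^ (-α) * (x ^ α / α))
        = (fun x : ℝ => (M * (x ^ α / α)) * (y - x) ^ (-α)) := by funext x; ring
    rw [hμ, e]
    exact hio
  -- product integrability
  have Hint : Integrable H (μ.prod volume) := by
    rw [integrable_prod_iff aesm]
    constructor
    · rw [hμ]
      exact (ae_restrict_iff' measurableSet_Ioc).mpr (ae_of_all _ sliceInt)
    · apply Bint.mono' aesm.norm.integral_prod_right'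
      rw [hμ]
      refine (ae_restrict_iff' measurableSet_Ioc).mpr (ae_of_all _ fun x hx => ?_)
      rw [Real.norm_of_nonneg (integral_nonneg fun t => norm_nonneg _)]
      exact normBound x hx
  have swap : (∫ x, (∫ t, H (x, t)) ∂μ) = ∫ t, (∫ x, H (x, t) ∂μ) :=
    integral_integral_swap Hint
  -- LHS is zero
  have lhs0 : (∫ x, (∫ t, H (x, t)) ∂μ) = 0 := by
    rw [hμ]
    apply setIntegral_eq_zero_of_forall_eq_zero
    intro x hx
    rw [slice x, MeasureTheory.integral_indicator measurableSet_Ioc,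
      ← intervalIntegral.integral_of_le hx.1.le, intervalIntegral.integral_mul_const,
      h x hx.1, zero_mul]
  -- RHS computation
  have rhs : (∫ t, (∫ x, H (x, t) ∂μ)) = betaC α * ∫ t in Ioc (0:ℝ) y, g t := by
    have hny : ∀ᵐ t : ℝ, t ≠ y := by
      filter_upwards [compl_mem_ae_iff.mpr (Real.volume_singleton (a := y))] with t ht
      simpa using ht
    have hae : ∀ᵐ t : ℝ, (∫ x, H (x, t) ∂μ)
        = (Ioc (0:ℝ) y).indicator (fun t => betaC α * g t) t := by
      filter_upwards [hny] with t hty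
      by_cases htIoc : t ∈ Ioc (0:ℝ) y
      · have ht0 : 0 < t := htIoc.1
        have hty' : t < y := lt_of_le_of_ne htIoc.2 hty
        have e : (fun x => H (x, t))
            = (Ici t).indicator (fun x => g t * (x - t) ^ (α - 1) * (y - x) ^ (-α)) := by
          funext x
          simp only [hH, hS, hK, indicator_apply, mem_setOf_eq, mem_Ici]
          by_cases hc : t ≤ x
          · simp [hc, ht0]
          · simp [hc]
        rw [hμ, e, setIntegral_indicator measurableSet_Ici]
        have eset : Ioc (0:ℝ) y ∩ Ici t = Icc t y := by
          ext x
          simp only [mem_inter_iff, mem_Ioc, mem_Ici, mem_Icc]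
          constructor
          · rintro ⟨⟨_, h2⟩, h3⟩; exact ⟨h3, h2⟩
          · rintro ⟨h1, h2⟩; exact ⟨⟨lt_of_lt_of_le ht0 h1, h2⟩, h1⟩
        rw [eset, MeasureTheory.integral_Icc_eq_integral_Ioc,
          ← intervalIntegral.integral_of_le hty'.le]
        simp only [mul_assoc]
        rw [intervalIntegral.integral_const_mul]
        rw [betaIdent ⟨hα0, hα1⟩ ht0.le hty', indicator_of_mem htIoc, mul_comm]
      · rw [indicator_of_notMem htIoc, hμ]
        apply setIntegral_eq_zero_of_forall_eq_zero
        intro x hx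
        have hnot : (x, t) ∉ S := by
          simp only [hS, mem_setOf_eq, not_and]
          intro h1 h2
          exact absurd ⟨h1, le_trans h2 hx.2⟩ htIoc
        exact Set.indicator_of_notMem hnot K
    rw [integral_congr_ae hae, MeasureTheory.integral_indicator measurableSet_Ioc,
      MeasureTheory.integral_const_mul]
  have hz : betaC α * ∫ t in Ioc (0:ℝ) y, g t = 0 := by
    rw [← rhs, ← swap, lhs0]
  rw [intervalIntegral.integral_of_le hy.le]
  rcases mul_eq_zero.mp hz with h1 | h2
  · exact absurd h1 (ne_of_gt (betaC_pos ⟨hα0, hα1⟩))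
  · exact h2


lemma abel_inj {α : ℝ} (hα : α ∈ Set.Ioo (0:ℝ) 1) (g : ℝ → ℝ) (hg : Continuous g)
    (h : ∀ x : ℝ, 0 < x → ∫ t in (0:ℝ)..x, g t * (x - t) ^ (α - 1) = 0) :
    ∀ x : ℝ, 0 < x → g x = 0 := by
  intro x hx
  have key := key_zero hα g hg h
  have Φder : HasDerivAt (fun u => ∫ t in (0:ℝ)..u, g t) (g x) x :=
    intervalIntegral.integral_hasDerivAt_right (hg.intervalIntegrable 0 x)
      (hg.stronglyMeasurable.stronglyMeasurableAtFilter) hg.continuousAt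
  have hev : (fun u => ∫ t in (0:ℝ)..u, g t) =ᶠ[nhds x] fun _ => (0:ℝ) := by
    filter_upwards [eventually_gt_nhds hx] with u hu
    exact key u hu
  have h0 : HasDerivAt (fun _ : ℝ => (0:ℝ)) (g x) x := Φder.congr_of_eventuallyEq hev.symm
  exact h0.unique (hasDerivAt_const x 0)

/-- Remark 4.7 (periodicity): a periodic function has a periodic Riemann–Liouville
fractional derivative with the same period. -/
theorem periodic_fractional_derivative (α τ : ℝ) (hα : α ∈ Set.Ioo (0:ℝ) 1) (hτ : 0 < τ)
    (f : ℝ → ℝ) (hf : Continuous f) (hper : Function.Periodic f τ) :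
    let Df : ℝ → ℝ :=
      fun x => deriv (fun y => (1 / Real.Gamma (1 - α)) *
        ∫ t in (0:ℝ)..y, f t * (y - t) ^ (-α)) x
    Continuous Df →
    (∀ x : ℝ, 0 < x →
      (1 / Real.Gamma α) * (∫ t in (0:ℝ)..x, (Df (t + τ) - Df t) * (x - t) ^ (α - 1)) = 0) →
    ∀ x : ℝ, 0 < x → Df (x + τ) = Df x := by
  intro Df hDf h x hx
  have hg : Continuous fun t => Df (t + τ) - Df t :=
    (hDf.comp (continuous_id.add continuous_const)).sub hDf
  have hΓ : Real.Gamma α ≠ 0 := ne_of_gt (Real.Gamma_pos_of_pos hα.1)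
  have h' : ∀ x : ℝ, 0 < x →
      ∫ t in (0:ℝ)..x, (Df (t + τ) - Df t) * (x - t) ^ (α - 1) = 0 := by
    intro x hx
    have := h x hx
    rcases mul_eq_zero.mp this with h1 | h2
    · exact absurd h1 (by simp [hΓ])
    · exact h2
  have := abel_inj hα (fun t => Df (t + τ) - Df t) hg h' x hx
  linarith [this]
end
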